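/- Let α ∈ (0,1), let f : X → Y, and let (D_n)_{n≥1} be a sequence of probability mass functions on X such that n ↦ supp_α((D_n).map f) is monotone nondecreasing and tends to infinity (a long-form generation task with coverage α). Then for every ε ∈ (0, 1−α), there do not exist a finite-state generation model (S, U, R) and an index n₀ such that err_n := Pr_{x∼D_n, y∼(U x).bind R}[y ≠ f(x)] ≤ ε for all n ≥ n₀. In particular, no procedure whose output hypotheses are finite-state generation models can achieve length generalization with error parameter ε < 1 − α on such a task. -/

import Mathlib

open scoped ENNReal Classical

/-- The minimum support size of mass `α` for a probability mass function `P` on `Y`: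
the least cardinality of a finite subset `A ⊆ Y` whose total `P`-mass is at least `α`. -/
noncomputable def minSupportSize {Y : Type*} (P : PMF Y) (α : ℝ≥0∞) : ℕ :=
  sInf {n : ℕ | ∃ A : Finset Y, A.card = n ∧ α ≤ ∑ y ∈ A, P y}

/-- On a long-form generation task with coverage `α`, for any `ε ∈ (0, 1 - α)` there is no
finite-state generation model `(S, U, R)` and index `n₀` whose error
`Pr_{x ∼ D_n, y ∼ (U x).bind R}[y ≠ f x]` is at most `ε` for all `n ≥ n₀`; in particular no
learner outputting finite-state generation models achieves length generalization with error
parameter `ε < 1 - α`. -/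
theorem no_length_generalization_of_finite_state_models {X Y : Type*} (α : ℝ≥0∞)
    (hα : α ∈ Set.Ioo (0 : ℝ≥0∞) 1) (f : X → Y) (D : ℕ → PMF X)
    (hmono : Monotone fun n => minSupportSize ((D n).map f) α)
    (htends : Filter.Tendsto (fun n => minSupportSize ((D n).map f) α)
      Filter.atTop Filter.atTop)
    (ε : ℝ≥0∞) (hε : 0 < ε) (hε' : ε < 1 - α) :
    ¬ ∃ (S : Type) (_ : Fintype S) (U : X → PMF S) (R : S → PMF Y) (n₀ : ℕ),
        ∀ n ≥ n₀,
          (∑' x, D n x * ∑' y, if y ≠ f x then ((U x).bind R) y else 0) ≤ ε := by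
  rintro ⟨S, _inst, U, R, n₀, herr⟩
  obtain ⟨hα0, hα1⟩ := hα
  set β : ℝ≥0∞ := 1 - α with hβ
  have hβ0 : β ≠ 0 := by
    rw [hβ, Ne, tsub_eq_zero_iff_le]
    exact hα1.not_ge
  have hβtop : β ≠ ∞ := (tsub_le_self.trans_lt ENNReal.one_lt_top).ne
  have hεtop : ε ≠ ∞ := (hε'.trans_le le_top).ne
  set u : ℝ≥0∞ := ε / β with hu
  have hu1 : u < 1 := by
    rw [hu, ENNReal.div_lt_iff (Or.inl hβ0) (Or.inl hβtop), one_mul]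
    exact hε'
  have hu0 : u ≠ 0 := by
    rw [hu]
    exact ENNReal.div_ne_zero.mpr ⟨hε.ne', hβtop⟩
  have hutop : u ≠ ∞ := hu1.ne_top
  set c : ℝ≥0∞ := 1 - u with hc
  have hc0 : c ≠ 0 := by
    rw [hc, Ne, tsub_eq_zero_iff_le]
    exact hu1.not_ge
  have h1c : 1 - c = u := ENNReal.sub_sub_cancel ENNReal.one_ne_top hu1.le
  -- total mass of the union of the `R s`
  set M : Y → ℝ≥0∞ := fun y => ∑' s : S, R s y with hM
  have hMsum : ∑' y, M y ≠ ∞ := by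
    rw [hM]
    simp only
    rw [ENNReal.tsum_comm]
    simp only [PMF.tsum_coe]
    rw [tsum_fintype]
    simp only [Finset.sum_const, Finset.card_univ, nsmul_eq_mul, mul_one]
    exact ENNReal.natCast_ne_top _
  have hfin : {y | c ≤ M y}.Finite :=
    ENNReal.finite_const_le_of_tsum_ne_top hMsum hc0
  set A : Finset Y := hfin.toFinset with hA
  -- the key claim: for every n ≥ n₀, the set A captures mass α of (D n).map f
  have hkey : ∀ n ≥ n₀, minSupportSize ((D n).map f) α ≤ A.card := by
    intro n hn
    have herrn := herr n hn
    -- pointwise: the error on input x is 1 - (bind)(f x)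
    have hpt : ∀ x : X, ((U x).bind R) (f x)
        + (∑' y, if y ≠ f x then ((U x).bind R) y else 0) = 1 := by
      intro x
      have h1 : (∑' y, ((U x).bind R) y) = 1 := PMF.tsum_coe _
      rw [ENNReal.tsum_eq_add_tsum_ite (f x)] at h1
      rw [← h1]
      congr 1
      refine tsum_congr fun y => ?_
      by_cases h : y = f x <;> simp [h]
    -- if f x ∉ A then the error on x is at least 1 - c
    have hlow : ∀ x : X, f x ∉ A →
        1 - c ≤ ∑' y, if y ≠ f x then ((U x).bind R) y else 0 := by
      intro x hx
      have hMlt : M (f x) < c := by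
        by_contra h
        exact hx (hfin.mem_toFinset.mpr (not_lt.1 h))
      have hble : ((U x).bind R) (f x) ≤ M (f x) := by
        rw [PMF.bind_apply, hM]
        exact ENNReal.tsum_le_tsum fun s => by
          calc U x s * R s (f x) ≤ 1 * R s (f x) := by
                gcongr; exact (U x).coe_le_one s
            _ = R s (f x) := one_mul _
      rw [tsub_le_iff_right]
      calc (1 : ℝ≥0∞) = ((U x).bind R) (f x)
            + (∑' y, if y ≠ f x then ((U x).bind R) y else 0) := (hpt x).symm
        _ ≤ c + (∑' y, if y ≠ f x then ((U x).bind R) y else 0) := by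
            gcongr; exact hble.trans hMlt.le
        _ = _ := add_comm _ _
    -- Markov-type bound
    set Bc : ℝ≥0∞ := ∑' x, if f x ∉ A then D n x else 0 with hBc
    set B : ℝ≥0∞ := ∑' x, if f x ∈ A then D n x else 0 with hB
    have hBBc : B + Bc = 1 := by
      rw [hB, hBc, ← ENNReal.tsum_add, ← PMF.tsum_coe (D n)]
      refine tsum_congr fun x => ?_
      by_cases h : f x ∈ A <;> simp [h]
    have hmarkov : u * Bc ≤ ε := by
      calc u * Bc = ∑' x, (if f x ∉ A then (1 - c) * D n x else 0) := by
            rw [hBc, ← h1c, ← ENNReal.tsum_mul_left]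
            refine tsum_congr fun x => ?_
            by_cases h : f x ∉ A <;> simp [h]
        _ ≤ ∑' x, D n x * ∑' y, if y ≠ f x then ((U x).bind R) y else 0 := by
            refine ENNReal.tsum_le_tsum fun x => ?_
            by_cases h : f x ∉ A
            · simp only [h, if_true, not_false_eq_true]
              rw [mul_comm]
              exact mul_le_mul_right (hlow x h) _
            · simp [h]
        _ ≤ ε := herrn
    have hBclow : Bc ≤ β := by
      by_contra h
      have : u * β < u * Bc := ENNReal.mul_lt_mul_right hu0 hutop (not_le.1 h)
      rw [hu, ENNReal.div_mul_cancel hβ0 hβtop] at this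
      exact absurd (this.trans_le hmarkov) (lt_irrefl _)
    have hαB : α ≤ B := by
      have h1 : (1 : ℝ≥0∞) - Bc ≤ B := by
        rw [tsub_le_iff_right]
        exact hBBc.ge
      calc α = 1 - β := (ENNReal.sub_sub_cancel ENNReal.one_ne_top hα1.le).symm
        _ ≤ 1 - Bc := tsub_le_tsub_left hBclow 1
        _ ≤ B := h1
    -- the mass of A under (D n).map f is B
    have hmass : α ≤ ∑ y ∈ A, ((D n).map f) y := by
      refine hαB.trans (le_of_eq ?_)
      rw [hB]
      have : ∀ y ∈ A, ((D n).map f) y = ∑' x, if y = f x then D n x else 0 := by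
        intro y _
        rw [PMF.map_apply]
      rw [Finset.sum_congr rfl this, ← Summable.tsum_finsetSum fun i _ => ENNReal.summable]
      refine tsum_congr fun x => ?_
      rw [Finset.sum_ite_eq' A (f x) (fun _ => D n x)]
    exact Nat.sInf_le ⟨A, rfl, hmass⟩
  -- contradiction with tendsto atTop
  obtain ⟨N, hN⟩ := Filter.eventually_atTop.mp (Filter.tendsto_atTop.mp htends (A.card + 1))
  have h1 := hkey (max n₀ N) (le_max_left _ _)
  have h2 := hN (max n₀ N) (le_max_right _ _)
  omega
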